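/- In the martingale array of Theorem (CLT for the test error), the sum of squared martingale differences satisfies Σ_{j=1}^{m_n} X_{n,j}² →_p L*(1−L*), where X_{n,j} = (ε_j − L_{D_n})/√(m_n), given that L_{D_n} →_p L* and the ε_j are conditionally i.i.d. Bernoulli(L_{D_n}) given D_n. -/

import Mathlib

open MeasureTheory ProbabilityTheory Filter
open scoped Topology Classical

/-- Conditionally i.i.d. Bernoulli(`L`) errors given the sub-σ-algebra `mD`. -/
def CondIIDBernoulli {Ω : Type*} {m0 : MeasurableSpace Ω} (μ : Measure Ω)
    (mD : MeasurableSpace Ω) {m : ℕ} (ε : Fin m → Ω → Prop) (L : Ω → ℝ) : Prop :=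
  ∀ b : Fin m → Bool,
    μ[Set.indicator {ω | ∀ i, ε i ω ↔ b i = true} (fun _ => (1 : ℝ)) | mD]
      =ᵐ[μ] fun ω => ∏ i, (if b i then L ω else 1 - L ω)


private lemma boolsum_prod (v : Bool → ℝ) : ∀ M : ℕ,
    (∑ b : Fin M → Bool, ∏ i, v (b i)) = (v true + v false) ^ M := by
  intro M
  induction M with
  | zero => simp
  | succ M ih =>
      rw [← (Fin.consEquiv (fun _ : Fin (M + 1) => Bool)).sum_comp
        (fun b => ∏ i, v (b i)), Fintype.sum_prod_type]
      simp only [Fin.consEquiv_apply, Fin.prod_univ_succ, Fin.cons_zero, Fin.cons_succ,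
        ← Finset.mul_sum]
      rw [Fintype.sum_bool]
      rw [ih]; ring

private lemma boolsum_lin (v u : Bool → ℝ) (hv : v true + v false = 1) : ∀ M : ℕ,
    (∑ b : Fin M → Bool, (∑ i, u (b i)) * ∏ i, v (b i))
      = M * (u true * v true + u false * v false) := by
  intro M
  induction M with
  | zero => simp
  | succ M ih =>
      rw [← (Fin.consEquiv (fun _ : Fin (M + 1) => Bool)).sum_comp
        (fun b => (∑ i, u (b i)) * ∏ i, v (b i)), Fintype.sum_prod_type]
      have inner : ∀ c : Bool,
          (∑ b : Fin M → Bool, (∑ i, u ((Fin.cons c b : Fin (M+1) → Bool) i)) * ∏ i, v ((Fin.cons c b : Fin (M+1) → Bool) i))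
            = u c * v c * (∑ b : Fin M → Bool, ∏ i, v (b i))
              + v c * (∑ b : Fin M → Bool, (∑ i, u (b i)) * ∏ i, v (b i)) := by
        intro c
        simp only [Fin.sum_univ_succ, Fin.prod_univ_succ, Fin.cons_zero, Fin.cons_succ,
          Finset.mul_sum, ← Finset.sum_add_distrib]
        exact Finset.sum_congr rfl fun b _ => by ring
      simp only [Fin.consEquiv_apply]
      rw [Fintype.sum_bool, inner true, inner false, ih, boolsum_prod v M, hv, one_pow]
      push_cast
      linear_combination (↑M * (u true * v true + u false * v false)) * hv

private lemma boolsum_sq (v u : Bool → ℝ) (hv : v true + v false = 1)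
    (hu : u true * v true + u false * v false = 0) : ∀ M : ℕ,
    (∑ b : Fin M → Bool, (∑ i, u (b i)) ^ 2 * ∏ i, v (b i))
      = M * (u true ^ 2 * v true + u false ^ 2 * v false) := by
  intro M
  induction M with
  | zero => simp
  | succ M ih =>
      rw [← (Fin.consEquiv (fun _ : Fin (M + 1) => Bool)).sum_comp
        (fun b => (∑ i, u (b i)) ^ 2 * ∏ i, v (b i)), Fintype.sum_prod_type]
      have inner : ∀ c : Bool,
          (∑ b : Fin M → Bool, (∑ i, u ((Fin.cons c b : Fin (M+1) → Bool) i)) ^ 2 * ∏ i, v ((Fin.cons c b : Fin (M+1) → Bool) i))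
            = u c ^ 2 * v c * (∑ b : Fin M → Bool, ∏ i, v (b i))
              + 2 * u c * v c * (∑ b : Fin M → Bool, (∑ i, u (b i)) * ∏ i, v (b i))
              + v c * (∑ b : Fin M → Bool, (∑ i, u (b i)) ^ 2 * ∏ i, v (b i)) := by
        intro c
        simp only [Fin.sum_univ_succ, Fin.prod_univ_succ, Fin.cons_zero, Fin.cons_succ,
          Finset.mul_sum, ← Finset.sum_add_distrib]
        exact Finset.sum_congr rfl fun b _ => by ring
      simp only [Fin.consEquiv_apply]
      rw [Fintype.sum_bool, inner true, inner false, ih, boolsum_prod v M,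
        boolsum_lin v u hv M, hv, one_pow]
      push_cast
      linear_combination (↑M * (u true ^ 2 * v true + u false ^ 2 * v false)) * hv
        + (2 * u true * v true * ↑M + 2 * u false * v false * ↑M) * hu

private lemma finite_chebyshev {M : ℕ} (hM : 1 ≤ M) {x s : ℝ}
    (hx0 : 0 ≤ x) (hx1 : x ≤ 1) (hs : 0 < s) :
    (∑ b : Fin M → Bool,
        (if |(∑ i, (if b i then (1:ℝ) else 0)) / M - x| > s then (1:ℝ) else 0)
          * ∏ i, (if b i then x else 1 - x))
      ≤ 1 / (4 * M * s ^ 2) := by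
  have hM0 : (0:ℝ) < M := by exact_mod_cast hM
  set u : Bool → ℝ := fun c => (if c then (1:ℝ) else 0) - x with hu_def
  set v : Bool → ℝ := fun c => if c then x else 1 - x with hv_def
  have hv : v true + v false = 1 := by simp [hv_def]
  have hu : u true * v true + u false * v false = 0 := by simp [hu_def, hv_def]; ring
  have hsum : ∀ b : Fin M → Bool, (∑ i, u (b i)) = (∑ i, (if b i then (1:ℝ) else 0)) - M * x := by
    intro b
    simp [hu_def, Finset.sum_sub_distrib, mul_comm]
  have hterm : ∀ b : Fin M → Bool,
      (if |(∑ i, (if b i then (1:ℝ) else 0)) / M - x| > s then (1:ℝ) else 0)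
          * ∏ i, (if b i then x else 1 - x)
        ≤ (∑ i, u (b i)) ^ 2 / (M * s) ^ 2 * ∏ i, v (b i) := by
    intro b
    have hprod : (0:ℝ) ≤ ∏ i, v (b i) :=
      Finset.prod_nonneg fun i _ => by by_cases h : b i <;> simp [hv_def, h] <;> linarith
    by_cases hcase : |(∑ i, (if b i then (1:ℝ) else 0)) / M - x| > s
    · rw [if_pos hcase]
      have h1 : |(∑ i, u (b i))| > M * s := by
        rw [hsum b]
        have : (∑ i, (if b i then (1:ℝ) else 0)) / M - x
            = ((∑ i, (if b i then (1:ℝ) else 0)) - M * x) / M := by field_simp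
        rw [this, abs_div, abs_of_pos hM0, gt_iff_lt, lt_div_iff₀ hM0] at hcase
        linarith [hcase]
      have h2 : (M * s) ^ 2 < (∑ i, u (b i)) ^ 2 := by
        have hsq := sq_abs (∑ i, u (b i))
        have hms : (0:ℝ) ≤ M * s := by positivity
        nlinarith [h1, hms, hsq]
      have h3 : (1:ℝ) ≤ (∑ i, u (b i)) ^ 2 / (M * s) ^ 2 := by
        rw [le_div_iff₀ (by positivity)]
        linarith
      calc (1:ℝ) * ∏ i, (if b i then x else 1 - x) = ∏ i, v (b i) := by simp [hv_def]
        _ ≤ (∑ i, u (b i)) ^ 2 / (M * s) ^ 2 * ∏ i, v (b i) :=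
            le_mul_of_one_le_left hprod h3
    · rw [if_neg hcase, zero_mul]
      positivity
  calc (∑ b : Fin M → Bool,
        (if |(∑ i, (if b i then (1:ℝ) else 0)) / M - x| > s then (1:ℝ) else 0)
          * ∏ i, (if b i then x else 1 - x))
      ≤ ∑ b : Fin M → Bool, (∑ i, u (b i)) ^ 2 / (M * s) ^ 2 * ∏ i, v (b i) :=
        Finset.sum_le_sum fun b _ => hterm b
    _ = (∑ b : Fin M → Bool, (∑ i, u (b i)) ^ 2 * ∏ i, v (b i)) / (M * s) ^ 2 := by
        rw [Finset.sum_div]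
        exact Finset.sum_congr rfl fun b _ => by ring
    _ = M * (u true ^ 2 * v true + u false ^ 2 * v false) / (M * s) ^ 2 := by
        rw [boolsum_sq v u hv hu M]
    _ = x * (1 - x) / (M * s ^ 2) := by
        simp only [hu_def, hv_def, Bool.false_eq_true, ↓reduceIte]; field_simp; ring
    _ ≤ 1 / (4 * M * s ^ 2) := by
        rw [div_le_div_iff₀ (by positivity) (by positivity)]
        nlinarith [sq_nonneg (x - 1/2), mul_pos hM0 (pow_pos hs 2)]

private lemma meas_absdev {Ω : Type*} {m : MeasurableSpace Ω} {f : Ω → ℝ}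
    (hf : Measurable f) (c s : ℝ) : MeasurableSet {ω | |c - f ω| > s} := by
  have h : Measurable fun ω => |c - f ω| := (measurable_const.sub hf).abs
  exact h measurableSet_Ioi

private lemma key_bound
    {Ω : Type*} (mD : MeasurableSpace Ω) {m0 : MeasurableSpace Ω}
    (μ : Measure Ω) [IsProbabilityMeasure μ]
    {M : ℕ} (hM : 1 ≤ M)
    (ε : Fin M → Ω → Prop) (L : Ω → ℝ)
    (hcond : ∀ b : Fin M → Bool,
      μ[Set.indicator {ω | ∀ i, ε i ω ↔ b i = true} (fun _ => (1 : ℝ)) | mD]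
        =ᵐ[μ] fun ω => ∏ i, (if b i then L ω else 1 - L ω))
    (hLbd : ∀ ω, L ω ∈ Set.Icc (0:ℝ) 1)
    {s : ℝ} (hs : 0 < s) :
    μ {ω | |(∑ j, (if ε j ω then (1:ℝ) else 0)) / (M:ℝ) - L ω| > s}
      ≤ ENNReal.ofReal (1 / (4 * M * s ^ 2)) := by
  classical
  have hM0 : (0:ℝ) < M := by exact_mod_cast hM
  set P : (Fin M → Bool) → Set Ω := fun b => {ω | ∀ i, ε i ω ↔ b i = true} with hP_def
  set I : (Fin M → Bool) → Ω → ℝ := fun b => (P b).indicator (fun _ => (1:ℝ)) with hI_def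
  set p : (Fin M → Bool) → Ω → ℝ := fun b ω => ∏ i, (if b i then L ω else 1 - L ω) with hp_def
  have hcond' : ∀ b, μ[I b | mD] =ᵐ[μ] p b := hcond
  have hp_sum : ∀ ω, (∑ b : Fin M → Bool, p b ω) = 1 := by
    intro ω
    have h := boolsum_prod (fun c => if c then L ω else 1 - L ω) M
    simpa [hp_def] using h
  have hp_nonneg : ∀ b ω, 0 ≤ p b ω := by
    intro b ω
    refine Finset.prod_nonneg fun i _ => ?_
    rcases hLbd ω with ⟨h0, h1⟩
    by_cases h : b i <;> simp [h] <;> linarith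
  have hP_disj : ∀ b b' : Fin M → Bool, b ≠ b' → P b ∩ P b' = ∅ := by
    intro b b' hne
    ext ω
    simp only [Set.mem_inter_iff, Set.mem_empty_iff_false, iff_false, not_and]
    intro h1 h2
    refine hne (funext fun i => ?_)
    have := ((h1 i).symm.trans (h2 i))
    cases hbi : b i <;> cases hbi' : b' i <;> simp_all
  -- mD ≤ m0
  have hle : mD ≤ m0 := by
    by_contra h
    have h0 : ∀ b : Fin M → Bool, p b =ᵐ[μ] 0 := fun b => by
      have hb := (hcond' b).symm
      rw [condExp_of_not_le h] at hb
      exact hb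
    have hall : ∀ᵐ ω ∂μ, ∀ b : Fin M → Bool, p b ω = 0 :=
      ae_all_iff.2 fun b => h0 b
    have hfalse : ∀ᵐ ω ∂μ, False := by
      filter_upwards [hall] with ω hω
      have h1 := hp_sum ω
      rw [Finset.sum_congr rfl fun b _ => hω b] at h1
      simpa using h1
    have h2 : μ {ω | ¬False} = 0 := ae_iff.1 hfalse
    simp [Set.setOf_true, measure_univ] at h2
  haveI : SigmaFinite (μ.trim hle) := by infer_instance
  have hp_int : ∀ b, Integrable (p b) μ := fun b => integrable_condExp.congr (hcond' b)
  have hpbad : ∀ b : Fin M → Bool, ¬Integrable (I b) μ → p b =ᵐ[μ] 0 := by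
    intro b hInt
    have hb := (hcond' b).symm
    rw [condExp_of_not_integrable hInt] at hb
    exact hb
  -- measurable versions of the pattern cells
  have hQex : ∀ b : Fin M → Bool, ∃ Q : Set Ω, MeasurableSet[m0] Q ∧
      (Integrable (I b) μ → ∀ᵐ ω ∂μ, ω ∈ P b ↔ ω ∈ Q) := by
    intro b
    by_cases hInt : Integrable (I b) μ
    · rcases hInt.1 with ⟨g, hg_sm, hg_ae⟩
      refine ⟨g ⁻¹' {1}, hg_sm.measurable (measurableSet_singleton 1), fun _ => ?_⟩
      filter_upwards [hg_ae] with ω hω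
      constructor
      · intro hmem
        have h1 : I b ω = 1 := by simp [hI_def, Set.indicator_of_mem hmem]
        simp only [Set.mem_preimage, Set.mem_singleton_iff, ← hω]
        exact h1
      · intro hmem
        by_contra hnot
        have h0 : I b ω = 0 := by simp [hI_def, Set.indicator_of_notMem hnot]
        have h1 : g ω = 1 := hmem
        rw [hω, h1] at h0
        exact one_ne_zero h0
    · exact ⟨∅, MeasurableSet.empty, fun h => absurd h hInt⟩
  choose Q hQmeas hPQ using hQex
  have hQint : ∀ b : Fin M → Bool, Integrable (I b) μ → ∀ A : Set Ω, MeasurableSet[mD] A →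
      μ (Q b ∩ A) = ENNReal.ofReal (∫ ω in A, p b ω ∂μ) := by
    intro b hInt A hA
    have hIQ : I b =ᵐ[μ] (Q b).indicator (fun _ => (1:ℝ)) := by
      filter_upwards [hPQ b hInt] with ω hω
      by_cases h : ω ∈ P b
      · rw [hI_def]
        simp only
        rw [Set.indicator_of_mem h, Set.indicator_of_mem (hω.1 h)]
      · rw [hI_def]
        simp only
        rw [Set.indicator_of_notMem h, Set.indicator_of_notMem (fun hq => h (hω.2 hq))]
    have e1 : ∫ ω in A, p b ω ∂μ = ∫ ω in A, (μ[I b|mD]) ω ∂μ :=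
      integral_congr_ae (ae_restrict_of_ae (hcond' b).symm)
    have e2 : ∫ ω in A, (μ[I b|mD]) ω ∂μ = ∫ ω in A, I b ω ∂μ :=
      setIntegral_condExp hle hInt hA
    have e3 : ∫ ω in A, I b ω ∂μ = ∫ ω in A, (Q b).indicator (fun _ => (1:ℝ)) ω ∂μ :=
      integral_congr_ae (ae_restrict_of_ae hIQ)
    have e4 : ∫ ω in A, (Q b).indicator (fun _ => (1:ℝ)) ω ∂μ = (μ (Q b ∩ A)).toReal := by
      rw [setIntegral_indicator (hQmeas b), setIntegral_const, smul_eq_mul, mul_one,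
        Set.inter_comm, measureReal_def]
    rw [e1, e2, e3, e4, ENNReal.ofReal_toReal (measure_ne_top μ _)]
  -- G = integrable patterns
  set G : Finset (Fin M → Bool) := Finset.univ.filter (fun b => Integrable (I b) μ) with hG_def
  have hGmem : ∀ b, b ∈ G ↔ Integrable (I b) μ := by
    intro b; simp [hG_def]
  -- union of measurable cells has full measure
  set W : Set Ω := ⋃ b ∈ G, Q b with hW_def
  have hWmeas : MeasurableSet[m0] W := G.measurableSet_biUnion (fun b _ => hQmeas b)
  have hWm : μ W = 1 := by
    rw [hW_def, measure_biUnion_finset₀ ?_ (fun b _ => (hQmeas b).nullMeasurableSet)]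
    · have hc : ∀ b ∈ G, μ (Q b) = ENNReal.ofReal (∫ ω, p b ω ∂μ) := by
        intro b hb
        have := hQint b ((hGmem b).1 hb) Set.univ MeasurableSet.univ
        simpa using this
      rw [Finset.sum_congr rfl hc,
        ← ENNReal.ofReal_sum_of_nonneg (fun b _ => integral_nonneg fun ω => hp_nonneg b ω),
        ← integral_finset_sum G (fun b _ => hp_int b)]
      have hae1 : (fun ω => ∑ b ∈ G, p b ω) =ᵐ[μ] fun _ => (1:ℝ) := by
        have hbadp : ∀ᵐ ω ∂μ, ∀ b : Fin M → Bool, ¬Integrable (I b) μ → p b ω = 0 := by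
          rw [ae_all_iff]
          intro b
          by_cases h : Integrable (I b) μ
          · filter_upwards with ω h'; exact absurd h h'
          · filter_upwards [hpbad b h] with ω hω _; exact hω
        filter_upwards [hbadp] with ω hω
        have hGsum : ∑ b ∈ G, p b ω = ∑ b : Fin M → Bool, p b ω := by
          refine Finset.sum_subset (Finset.subset_univ G) ?_
          intro x _ hx
          exact hω x (by simpa [hGmem] using hx)
        rw [hGsum, hp_sum ω]
      rw [integral_congr_ae hae1]
      simp
    · intro b1 h1 b2 h2 hne
      have : μ (Q b1 ∩ Q b2) = 0 := by
        rw [measure_eq_zero_iff_ae_notMem]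
        filter_upwards [hPQ b1 ((hGmem b1).1 h1), hPQ b2 ((hGmem b2).1 h2)] with ω e1 e2
        rintro ⟨m1, m2⟩
        have hmem : ω ∈ P b1 ∩ P b2 := ⟨e1.2 m1, e2.2 m2⟩
        rw [hP_disj b1 b2 hne] at hmem
        exact hmem
      exact this
  have hWc : μ Wᶜ = 0 := by
    have h := measure_compl hWmeas (measure_ne_top μ W)
    rw [hWm, measure_univ] at h
    simpa using h
  have hbad : ∀ b : Fin M → Bool, ¬Integrable (I b) μ → μ (P b) = 0 := by
    intro b hbInt
    have hsub : P b ⊆ Wᶜ ∪ ⋃ b' ∈ G, (Q b' \ P b') := by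
      intro ω hω
      by_cases hw : ω ∈ W
      · rcases Set.mem_iUnion₂.1 hw with ⟨b', hb', hq⟩
        refine Set.mem_union_right _ (Set.mem_iUnion₂.2 ⟨b', hb', hq, ?_⟩)
        intro hp'
        have hne : b ≠ b' := by
          rintro rfl
          exact hbInt ((hGmem b).1 hb')
        have hmem : ω ∈ P b ∩ P b' := ⟨hω, hp'⟩
        rw [hP_disj b b' hne] at hmem
        exact hmem
      · exact Set.mem_union_left _ hw
    refine measure_mono_null hsub (measure_union_null hWc ?_)
    refine (measure_biUnion_null_iff G.countable_toSet).2 fun b' hb' => ?_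
    rw [measure_eq_zero_iff_ae_notMem]
    filter_upwards [hPQ b' ((hGmem b').1 hb')] with ω hω
    rintro ⟨hq, hnp⟩
    exact hnp (hω.2 hq)
  -- measurable a.e. version of L
  set cnt : (Fin M → Bool) → ℝ := fun b => ∑ i, (if b i then (1:ℝ) else 0) with hcnt_def
  set L'' : Ω → ℝ := fun ω => (∑ b : Fin M → Bool, cnt b * (μ[I b|mD]) ω) / M with hL''_def
  have hL''meas : Measurable[mD] L'' := by
    refine Measurable.div_const ?_ _
    exact Finset.measurable_sum _ (fun b _ =>
      (stronglyMeasurable_condExp.measurable).const_mul (cnt b))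
  have hLL : L =ᵐ[μ] L'' := by
    have hall : ∀ᵐ ω ∂μ, ∀ b : Fin M → Bool, (μ[I b|mD]) ω = p b ω :=
      ae_all_iff.2 hcond'
    filter_upwards [hall] with ω hω
    have hsum : (∑ b : Fin M → Bool, cnt b * p b ω) = M * L ω := by
      have h := boolsum_lin (fun c => if c then L ω else 1 - L ω)
        (fun c => if c then (1:ℝ) else 0) (by simp) M
      simpa [hcnt_def, hp_def] using h
    rw [hL''_def]
    simp only
    rw [Finset.sum_congr rfl (fun b _ => by rw [hω b]), hsum]
    field_simp
  -- the mD-measurable deviation sets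
  set C : (Fin M → Bool) → Set Ω := fun b => {ω | |cnt b / M - L'' ω| > s} with hC_def
  have hCmeas : ∀ b, MeasurableSet[mD] (C b) := fun b =>
    meas_absdev (m := mD) hL''meas (cnt b / (M:ℝ)) s
  have hCm0 : ∀ b, MeasurableSet[m0] (C b) := fun b => hle _ (hCmeas b)
  -- inclusion
  have hUsub : {ω | |(∑ j, (if ε j ω then (1:ℝ) else 0)) / (M:ℝ) - L ω| > s}
      ⊆ (⋃ b : Fin M → Bool, P b ∩ C b) ∪ {ω | ¬ (L ω = L'' ω)} := by
    intro ω hω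
    by_cases he : L ω = L'' ω
    · set b0 : Fin M → Bool := fun i => if ε i ω then true else false with hb0_def
      have hPmem : ω ∈ P b0 := by
        intro i
        by_cases h : ε i ω <;> simp [hb0_def, h]
      have hcnt0 : cnt b0 = ∑ j, (if ε j ω then (1:ℝ) else 0) := by
        refine Finset.sum_congr rfl fun j _ => ?_
        by_cases h : ε j ω <;> simp [hb0_def, h]
      refine Set.mem_union_left _ (Set.mem_iUnion.2 ⟨b0, hPmem, ?_⟩)
      show |cnt b0 / (M:ℝ) - L'' ω| > s
      rw [hcnt0, ← he]
      exact hω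
    · exact Set.mem_union_right _ he
  calc μ {ω | |(∑ j, (if ε j ω then (1:ℝ) else 0)) / (M:ℝ) - L ω| > s}
      ≤ μ ((⋃ b : Fin M → Bool, P b ∩ C b) ∪ {ω | ¬ (L ω = L'' ω)}) := measure_mono hUsub
    _ ≤ μ (⋃ b : Fin M → Bool, P b ∩ C b) + μ {ω | ¬ (L ω = L'' ω)} := measure_union_le _ _
    _ = μ (⋃ b : Fin M → Bool, P b ∩ C b) := by
        have h0 : μ {ω | ¬ (L ω = L'' ω)} = 0 := by
          rw [measure_eq_zero_iff_ae_notMem]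
          filter_upwards [hLL] with ω hω
          simpa using hω
        rw [h0, add_zero]
    _ ≤ ∑' b : Fin M → Bool, μ (P b ∩ C b) := measure_iUnion_le _
    _ = ∑ b : Fin M → Bool, μ (P b ∩ C b) := tsum_fintype _
    _ ≤ ∑ b : Fin M → Bool, ENNReal.ofReal (∫ ω in C b, p b ω ∂μ) := by
        refine Finset.sum_le_sum fun b _ => ?_
        by_cases hInt : Integrable (I b) μ
        · have hre : μ (P b ∩ C b) = μ (Q b ∩ C b) := by
            refine measure_congr ?_
            exact Filter.EventuallyEq.inter
              (Filter.eventuallyEq_set.2 (hPQ b hInt)) (Filter.EventuallyEq.refl _ _)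
          rw [hre, hQint b hInt (C b) (hCmeas b)]
        · have h0 : μ (P b ∩ C b) = 0 :=
            measure_mono_null Set.inter_subset_left (hbad b hInt)
          rw [h0]
          positivity
    _ = ENNReal.ofReal (∑ b : Fin M → Bool, ∫ ω in C b, p b ω ∂μ) :=
        (ENNReal.ofReal_sum_of_nonneg fun b _ =>
          setIntegral_nonneg (hCm0 b) fun ω _ => hp_nonneg b ω).symm
    _ ≤ ENNReal.ofReal (1 / (4 * M * s ^ 2)) := by
        apply ENNReal.ofReal_le_ofReal
        have hind : ∀ b : Fin M → Bool,
            ∫ ω in C b, p b ω ∂μ = ∫ ω, (C b).indicator (p b) ω ∂μ :=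
          fun b => (integral_indicator (hCm0 b)).symm
        rw [Finset.sum_congr rfl fun b _ => hind b,
          ← integral_finset_sum _ (fun b _ => (hp_int b).indicator (hCm0 b))]
        have hbound : ∀ᵐ ω ∂μ,
            (∑ b : Fin M → Bool, (C b).indicator (p b) ω) ≤ 1 / (4 * M * s ^ 2) := by
          filter_upwards [hLL] with ω he
          have hcheb := finite_chebyshev hM (hLbd ω).1 (hLbd ω).2 hs
          have hstep : ∀ b : Fin M → Bool, (C b).indicator (p b) ω
              = (if |cnt b / (M:ℝ) - L ω| > s then (1:ℝ) else 0) * p b ω := by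
            intro b
            by_cases hc : ω ∈ C b
            · have hcL : |cnt b / (M:ℝ) - L ω| > s := by
                rw [he]; exact hc
              rw [Set.indicator_of_mem hc, if_pos hcL, one_mul]
            · have hcL : ¬ (|cnt b / (M:ℝ) - L ω| > s) := by
                rw [he]; exact hc
              rw [Set.indicator_of_notMem hc, if_neg hcL, zero_mul]
          rw [Finset.sum_congr rfl fun b _ => hstep b]
          simpa [hcnt_def, hp_def] using hcheb
        have hintsum : Integrable (fun ω => ∑ b : Fin M → Bool, (C b).indicator (p b) ω) μ :=
          integrable_finset_sum _ fun b _ => (hp_int b).indicator (hCm0 b)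
        calc ∫ ω, (∑ b : Fin M → Bool, (C b).indicator (p b) ω) ∂μ
            ≤ ∫ _ω, (1 / (4 * M * s ^ 2) : ℝ) ∂μ :=
              integral_mono_ae hintsum (integrable_const _) hbound
          _ = 1 / (4 * M * s ^ 2) := by simp

/-- In the martingale array of the CLT for the test error, with
`X_{n,j} = (ε_j − L_{D_n}) / √(m_n)`, the sum of squared martingale differences
converges in probability: `Σ_j X_{n,j}² →_p L*(1 − L*)`. -/
theorem sum_sq_martingale_differences_tendsto
    {Ω : Type*} [MeasurableSpace Ω] (μ : Measure Ω) [IsProbabilityMeasure μ]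
    (m : ℕ → ℕ) (mD : ℕ → MeasurableSpace Ω)
    (ε : ∀ n, Fin (m n) → Ω → Prop) (L : ℕ → Ω → ℝ) (Lstar : ℝ)
    (hcond : ∀ n, CondIIDBernoulli μ (mD n) (ε n) (L n))
    (hLmeas : ∀ n, Measurable (L n))
    (hLbd : ∀ n ω, L n ω ∈ Set.Icc (0 : ℝ) 1)
    (hm : Tendsto m atTop atTop)
    (hcons : ∀ δ : ℝ, 0 < δ →
      Tendsto (fun n => μ {ω | |L n ω - Lstar| > δ}) atTop (𝓝 0)) :
    ∀ t : ℝ, 0 < t →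
      Tendsto (fun n =>
          μ {ω | |(∑ j, ((if ε n j ω then (1 : ℝ) else 0) - L n ω) ^ 2) / (m n : ℝ)
                - Lstar * (1 - Lstar)| > t})
        atTop (𝓝 0) := by
  intro t ht
  -- L* lies in [0,1]
  have hLs0 : 0 ≤ Lstar := by
    by_contra h
    push_neg at h
    have hδ : 0 < -Lstar / 2 := by linarith
    have huniv : ∀ n, {ω | |L n ω - Lstar| > -Lstar / 2} = Set.univ := by
      intro n
      ext ω
      simp only [Set.mem_setOf_eq, Set.mem_univ, iff_true, gt_iff_lt]
      have h0 := (hLbd n ω).1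
      rw [abs_of_pos (by linarith : (0:ℝ) < L n ω - Lstar)]
      linarith
    have h1 := hcons (-Lstar / 2) hδ
    simp only [huniv, measure_univ] at h1
    have h2 := tendsto_nhds_unique h1 tendsto_const_nhds
    simp at h2
  have hLs1 : Lstar ≤ 1 := by
    by_contra h
    push_neg at h
    have hδ : 0 < (Lstar - 1) / 2 := by linarith
    have huniv : ∀ n, {ω | |L n ω - Lstar| > (Lstar - 1) / 2} = Set.univ := by
      intro n
      ext ω
      simp only [Set.mem_setOf_eq, Set.mem_univ, iff_true, gt_iff_lt]
      have h1' := (hLbd n ω).2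
      rw [abs_of_neg (by linarith : L n ω - Lstar < 0)]
      linarith
    have h1 := hcons ((Lstar - 1) / 2) hδ
    simp only [huniv, measure_univ] at h1
    have h2 := tendsto_nhds_unique h1 tendsto_const_nhds
    simp at h2
  have ht2 : 0 < t / 2 := by linarith
  -- the eventual bound
  have hM4 : ∀ n, 1 ≤ m n →
      μ {ω | |(∑ j, ((if ε n j ω then (1 : ℝ) else 0) - L n ω) ^ 2) / (m n : ℝ)
            - Lstar * (1 - Lstar)| > t}
        ≤ ENNReal.ofReal (1 / (4 * (m n) * (t/2) ^ 2)) + μ {ω | |L n ω - Lstar| > t/2} := by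
    intro n hn
    have hMpos : (0:ℝ) < (m n : ℝ) := by exact_mod_cast hn
    have hsub : {ω | |(∑ j, ((if ε n j ω then (1 : ℝ) else 0) - L n ω) ^ 2) / (m n : ℝ)
            - Lstar * (1 - Lstar)| > t}
        ⊆ {ω | |(∑ j, (if ε n j ω then (1:ℝ) else 0)) / (m n : ℝ) - L n ω| > t/2}
          ∪ {ω | |L n ω - Lstar| > t/2} := by
      intro ω hω
      simp only [Set.mem_setOf_eq, gt_iff_lt] at hω
      by_contra hc
      simp only [Set.mem_union, Set.mem_setOf_eq, gt_iff_lt, not_or, not_lt] at hc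
      obtain ⟨h1, h2⟩ := hc
      rcases hLbd n ω with ⟨hl0, hl1⟩
      have hterm : ∀ j : Fin (m n), ((if ε n j ω then (1:ℝ) else 0) - L n ω) ^ 2
          = (1 - 2 * L n ω) * (if ε n j ω then (1:ℝ) else 0) + L n ω ^ 2 := by
        intro j
        by_cases h : ε n j ω <;> simp [h] <;> ring
      have hsq : (∑ j, ((if ε n j ω then (1:ℝ) else 0) - L n ω) ^ 2)
          = (1 - 2 * L n ω) * (∑ j, (if ε n j ω then (1:ℝ) else 0)) + (m n : ℝ) * L n ω ^ 2 := by
        rw [Finset.sum_congr rfl fun j _ => hterm j, Finset.sum_add_distrib, ← Finset.mul_sum]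
        simp [Finset.card_univ, mul_comm]
      set A := (∑ j, (if ε n j ω then (1:ℝ) else 0)) / (m n : ℝ) with hA_def
      have hkey : (∑ j, ((if ε n j ω then (1:ℝ) else 0) - L n ω) ^ 2) / (m n : ℝ)
            - Lstar * (1 - Lstar)
          = (1 - 2 * L n ω) * (A - L n ω) + (L n ω - Lstar) * (1 - (L n ω + Lstar)) := by
        rw [hsq, hA_def]
        field_simp
        ring
      have habs : |(∑ j, ((if ε n j ω then (1:ℝ) else 0) - L n ω) ^ 2) / (m n : ℝ)
            - Lstar * (1 - Lstar)| ≤ |A - L n ω| + |L n ω - Lstar| := by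
        rw [hkey]
        calc |(1 - 2 * L n ω) * (A - L n ω) + (L n ω - Lstar) * (1 - (L n ω + Lstar))|
            ≤ |(1 - 2 * L n ω) * (A - L n ω)| + |(L n ω - Lstar) * (1 - (L n ω + Lstar))| :=
              abs_add_le _ _
          _ = |1 - 2 * L n ω| * |A - L n ω| + |L n ω - Lstar| * |1 - (L n ω + Lstar)| := by
              rw [abs_mul, abs_mul]
          _ ≤ 1 * |A - L n ω| + |L n ω - Lstar| * 1 := by
              refine add_le_add
                (mul_le_mul_of_nonneg_right (abs_le.2 ⟨by linarith, by linarith⟩) (abs_nonneg _))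
                (mul_le_mul_of_nonneg_left (abs_le.2 ⟨by linarith, by linarith⟩) (abs_nonneg _))
          _ = |A - L n ω| + |L n ω - Lstar| := by ring
      linarith
    have hkb : μ {ω | |(∑ j, (if ε n j ω then (1:ℝ) else 0)) / (m n : ℝ) - L n ω| > t/2}
        ≤ ENNReal.ofReal (1 / (4 * (m n) * (t/2) ^ 2)) := by
      have hc' : ∀ b : Fin (m n) → Bool,
          μ[Set.indicator {ω | ∀ i, ε n i ω ↔ b i = true} (fun _ => (1 : ℝ)) | mD n]
            =ᵐ[μ] fun ω => ∏ i, (if b i then L n ω else 1 - L n ω) := hcond n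
      exact key_bound (mD n) μ hn (ε n) (L n) hc' (hLbd n) ht2
    calc μ {ω | |(∑ j, ((if ε n j ω then (1 : ℝ) else 0) - L n ω) ^ 2) / (m n : ℝ)
            - Lstar * (1 - Lstar)| > t}
        ≤ μ ({ω | |(∑ j, (if ε n j ω then (1:ℝ) else 0)) / (m n : ℝ) - L n ω| > t/2}
            ∪ {ω | |L n ω - Lstar| > t/2}) := measure_mono hsub
      _ ≤ μ {ω | |(∑ j, (if ε n j ω then (1:ℝ) else 0)) / (m n : ℝ) - L n ω| > t/2}
            + μ {ω | |L n ω - Lstar| > t/2} := measure_union_le _ _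
      _ ≤ ENNReal.ofReal (1 / (4 * (m n) * (t/2) ^ 2)) + μ {ω | |L n ω - Lstar| > t/2} :=
            add_le_add hkb le_rfl
  -- the bound tends to zero
  have hc2 := hcons (t/2) ht2
  have hB : Tendsto (fun n => ENNReal.ofReal (1 / (4 * (m n) * (t/2) ^ 2))
      + μ {ω | |L n ω - Lstar| > t/2}) atTop (𝓝 0) := by
    have h1 : Tendsto (fun n => (1 / (4 * (m n : ℝ) * (t/2) ^ 2))) atTop (𝓝 0) := by
      have heq : ∀ n : ℕ, (1 / (4 * (m n : ℝ) * (t/2) ^ 2))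
          = (1 / (4 * (t/2) ^ 2)) / (m n : ℝ) := by
        intro n
        rw [div_div]
        ring_nf
      simp only [heq]
      exact Tendsto.div_atTop tendsto_const_nhds (tendsto_natCast_atTop_atTop.comp hm)
    have h2 : Tendsto (fun n => ENNReal.ofReal (1 / (4 * (m n : ℝ) * (t/2) ^ 2))) atTop
        (𝓝 (ENNReal.ofReal 0)) := (ENNReal.continuous_ofReal.tendsto 0).comp h1
    have h2' : Tendsto (fun n => ENNReal.ofReal (1 / (4 * (m n : ℝ) * (t/2) ^ 2))) atTop (𝓝 0) := by
      simpa using h2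
    simpa using h2'.add hc2
  refine tendsto_of_tendsto_of_tendsto_of_le_of_le' tendsto_const_nhds hB ?_ ?_
  · filter_upwards with n
    positivity
  · filter_upwards [hm.eventually_ge_atTop 1] with n hn
    exact hM4 n hn
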